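/- Let F(X) ∈ ℤ[X] be a decomposable form of degree d in n variables that does not vanish on ℤⁿ \ {0}, and suppose V(F) is finite. Then 𝔪(F) ≥ n^{-d(n+1/2)/n}. -/

import Mathlib

open scoped BigOperators
open MeasureTheory

/-- The Euclidean (L²) norm of a coefficient vector in `ℂⁿ`. -/
noncomputable def e2norm {n : ℕ} (v : Fin n → ℂ) : ℝ := Real.sqrt (∑ j, ‖v j‖ ^ 2)

/-- Coefficient vectors of the linear factors of `F ∘ S`. -/
noncomputable def compMat {n d : ℕ} (L : Fin d → Fin n → ℂ)
    (S : Matrix (Fin n) (Fin n) ℝ) : Fin d → Fin n → ℂ :=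
  fun i j => ∑ k, L i k * (S k j : ℂ)

/-- The geometric height `𝔪(F) = inf {H(F∘S) : S ∈ GLₙ(ℝ), |det S| = 1}`. -/
noncomputable def mD {n d : ℕ} (L : Fin d → Fin n → ℂ) : ℝ :=
  sInf {h : ℝ | ∃ S : Matrix (Fin n) (Fin n) ℝ, |S.det| = 1 ∧
    h = ∏ i, e2norm (compMat L S i)}

lemma e2norm_nonneg {n : ℕ} (v : Fin n → ℂ) : 0 ≤ e2norm v := Real.sqrt_nonneg _

lemma cauchy_schwarz_e2 {n : ℕ} (v : Fin n → ℂ) (x : Fin n → ℝ) :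
    ‖∑ j, v j * (x j : ℂ)‖ ≤ e2norm v * Real.sqrt (∑ j, (x j) ^ 2) := by
  calc ‖∑ j, v j * (x j : ℂ)‖ ≤ ∑ j, ‖v j‖ * |x j| := by
        refine (norm_sum_le _ _).trans (le_of_eq (Finset.sum_congr rfl fun j _ => ?_))
        rw [norm_mul, Complex.norm_real, Real.norm_eq_abs]
    _ ≤ e2norm v * Real.sqrt (∑ j, (x j) ^ 2) := by
        have h := Finset.sum_mul_sq_le_sq_mul_sq Finset.univ (fun j => ‖v j‖) (fun j => |x j|)
        have h0 : (0:ℝ) ≤ ∑ j, ‖v j‖ * |x j| :=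
          Finset.sum_nonneg fun j _ => mul_nonneg (norm_nonneg _) (abs_nonneg _)
        have h2 := Real.sqrt_le_sqrt h
        rw [Real.sqrt_sq h0, Real.sqrt_mul (Finset.sum_nonneg fun j _ => sq_nonneg _)] at h2
        simpa [e2norm, sq_abs] using h2

lemma e2norm_eq_zero_entries {n : ℕ} (v : Fin n → ℂ) (h : e2norm v = 0) (j : Fin n) : v j = 0 := by
  have hs : (∑ j, ‖v j‖ ^ 2) = 0 := by
    have := Real.sqrt_eq_zero (Finset.sum_nonneg fun j _ => sq_nonneg _) |>.mp h
    exact this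
  have := (Finset.sum_eq_zero_iff_of_nonneg (fun j _ => sq_nonneg ‖v j‖)).mp hs j (Finset.mem_univ j)
  have : ‖v j‖ = 0 := by nlinarith [norm_nonneg (v j)]
  simpa using this

lemma int_coords {n : ℕ} (z : Fin n → ℝ)
    (hz : z ∈ Submodule.span ℤ (Set.range (Pi.basisFun ℝ (Fin n)))) (j : Fin n) :
    ∃ k : ℤ, z j = k := by
  induction hz using Submodule.span_induction with
  | mem x hx =>
    obtain ⟨i, rfl⟩ := hx
    by_cases h : i = j
    · exact ⟨1, by simp [Pi.basisFun_apply, h]⟩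
    · exact ⟨0, by simp [Pi.basisFun_apply, Pi.single_apply, h]⟩
  | zero => exact ⟨0, by simp⟩
  | add x y _ _ hx hy => obtain ⟨a, ha⟩ := hx; obtain ⟨b, hb⟩ := hy; exact ⟨a+b, by simp [ha,hb]⟩
  | smul a x _ hx => obtain ⟨b, hb⟩ := hx; exact ⟨a*b, by simp [hb]⟩

/-- Key estimate: for every `S` with `|det S| = 1`, `1 ≤ H(F∘S)·(√n)^d`. -/
lemma key_height_bound (n d : ℕ) (hn : 0 < n) (hd : 0 < d)
    (L : Fin d → Fin n → ℂ) (F : (Fin n → ℝ) → ℝ)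
    (hF : ∀ x : Fin n → ℝ, (F x : ℂ) = ∏ i, ∑ j, L i j * (x j : ℂ))
    (hint : ∀ x : Fin n → ℤ, ∃ k : ℤ, F (fun j => (x j : ℝ)) = k)
    (hnv : ∀ x : Fin n → ℤ, x ≠ 0 → F (fun j => (x j : ℝ)) ≠ 0)
    (S : Matrix (Fin n) (Fin n) ℝ) (hS : |S.det| = 1) :
    1 ≤ (∏ i, e2norm (compMat L S i)) * Real.sqrt n ^ d := by
  set H : ℝ := ∏ i, e2norm (compMat L S i) with hH
  -- factorization of F ∘ S
  have hfac : ∀ x : Fin n → ℝ,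
      ((F (S.mulVec x) : ℝ) : ℂ) = ∏ i, ∑ j, compMat L S i j * (x j : ℂ) := by
    intro x
    rw [hF]
    refine Finset.prod_congr rfl fun i _ => ?_
    unfold compMat
    simp only [Matrix.mulVec, dotProduct]
    push_cast
    simp_rw [Finset.mul_sum, Finset.sum_mul, mul_assoc]
    exact Finset.sum_comm ..
  have hsn : (1:ℝ) ≤ Real.sqrt n := by
    rw [show (1:ℝ) = Real.sqrt 1 by simp]
    exact Real.sqrt_le_sqrt (by exact_mod_cast hn)
  -- positivity of H
  have hH0 : 0 < H := by
    rcases lt_or_eq_of_le (Finset.prod_nonneg fun i _ => e2norm_nonneg _) with h | h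
    · exact h
    obtain ⟨i0, _, hi0⟩ := Finset.prod_eq_zero_iff.mp h.symm
    exfalso
    have hrow : ∀ j, compMat L S i0 j = 0 := e2norm_eq_zero_entries _ hi0
    have hFz : ∀ x : Fin n → ℝ, F (S.mulVec x) = 0 := by
      intro x
      have := hfac x
      rw [Finset.prod_eq_zero (Finset.mem_univ i0) (by simp [hrow])] at this
      exact_mod_cast this
    have hdet : IsUnit S.det := by
      refine isUnit_iff_ne_zero.mpr fun h0 => ?_
      rw [h0] at hS; simp at hS
    set i1 : Fin n := ⟨0, hn⟩
    set w : Fin n → ℤ := fun j => if j = i1 then 1 else 0 with hw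
    have hwne : w ≠ 0 := by
      intro h0
      have := congrFun h0 i1
      simp [hw] at this
    have hcast : (fun j => ((w j : ℤ) : ℝ)) = S.mulVec (S⁻¹.mulVec fun j => ((w j : ℤ) : ℝ)) := by
      rw [Matrix.mulVec_mulVec, Matrix.mul_nonsing_inv S hdet, Matrix.one_mulVec]
    exact hnv w hwne (by rw [hcast]; exact hFz _)
  -- pointwise bound
  have hbound : ∀ (c : ℝ), 0 ≤ c → ∀ x : Fin n → ℝ, (∀ j, |x j| ≤ c) →
      |F (S.mulVec x)| ≤ H * (Real.sqrt n * c) ^ d := by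
    intro c hc x hx
    have hxs : Real.sqrt (∑ j, (x j) ^ 2) ≤ Real.sqrt n * c := by
      have hsum : ∑ j, (x j) ^ 2 ≤ (n:ℝ) * c ^ 2 := by
        calc ∑ j, (x j) ^ 2 ≤ ∑ _j : Fin n, c ^ 2 :=
              Finset.sum_le_sum fun j _ => by nlinarith [hx j, abs_nonneg (x j), sq_abs (x j)]
          _ = (n:ℝ) * c ^ 2 := by simp [Finset.sum_const, Finset.card_univ, nsmul_eq_mul]
      calc Real.sqrt (∑ j, (x j) ^ 2) ≤ Real.sqrt ((n:ℝ) * c ^ 2) := Real.sqrt_le_sqrt hsum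
        _ = Real.sqrt n * c := by
            rw [Real.sqrt_mul (Nat.cast_nonneg n), Real.sqrt_sq hc]
    have h1 : |F (S.mulVec x)| = ‖((F (S.mulVec x) : ℝ) : ℂ)‖ := by
      rw [Complex.norm_real, Real.norm_eq_abs]
    rw [h1, hfac x, norm_prod]
    calc ∏ i, ‖∑ j, compMat L S i j * (x j : ℂ)‖
        ≤ ∏ i, (e2norm (compMat L S i) * (Real.sqrt n * c)) := by
          refine Finset.prod_le_prod (fun i _ => norm_nonneg _) (fun i _ => ?_)
          exact (cauchy_schwarz_e2 _ x).trans
            (mul_le_mul_of_nonneg_left hxs (e2norm_nonneg _))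
      _ = H * (Real.sqrt n * c) ^ d := by
          rw [Finset.prod_mul_distrib, Finset.prod_const, Finset.card_univ, Fintype.card_fin]
  -- Minkowski argument
  by_contra hcon
  push_neg at hcon
  set ε : ℝ := H * Real.sqrt n ^ d with hε
  have hε0 : 0 < ε := mul_pos hH0 (pow_pos (lt_of_lt_of_le one_pos hsn) d)
  have hε1 : ε < 1 := hcon
  set c : ℝ := ε ^ (-(1:ℝ) / (2 * (d:ℝ))) with hcdef
  have hc1 : 1 < c := by
    rw [hcdef]
    rw [Real.one_lt_rpow_iff_of_pos hε0]
    exact Or.inr ⟨hε1, div_neg_of_neg_of_pos (by norm_num) (by positivity)⟩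
  have hcd : c ^ d = ε ^ (-(1:ℝ) / 2) := by
    rw [hcdef, ← Real.rpow_natCast (ε ^ (-(1:ℝ) / (2 * (d:ℝ)))) d, ← Real.rpow_mul hε0.le]
    congr 1
    field_simp
  have hfinal : H * (Real.sqrt n * c) ^ d < 1 := by
    rw [mul_pow, ← mul_assoc, ← hε, hcd]
    calc ε * ε ^ (-(1:ℝ) / 2) = ε ^ ((1:ℝ) + -(1:ℝ) / 2) := by
          rw [Real.rpow_add hε0, Real.rpow_one]
      _ = ε ^ ((1:ℝ) / 2) := by norm_num
      _ < 1 := Real.rpow_lt_one hε0.le hε1 (by norm_num)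
  -- set up the lattice and convex body
  set b := Pi.basisFun ℝ (Fin n) with hb
  haveI : Countable (Submodule.span ℤ (Set.range b)).toAddSubgroup :=
    inferInstanceAs (Countable (Submodule.span ℤ (Set.range b)))
  have fund := ZSpan.isAddFundamentalDomain' b volume
  have hFdvol : volume (ZSpan.fundamentalDomain b) = 1 := by
    rw [hb, ZSpan.fundamentalDomain_pi_basisFun, volume_pi_pi]
    simp
  set cube : Set (Fin n → ℝ) := Set.univ.pi fun _ => Set.Ioo (-c) c with hcube
  set f := Matrix.toLin' S with hf
  have hsymm : ∀ x ∈ f '' cube, -x ∈ f '' cube := by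
    rintro x ⟨y, hy, rfl⟩
    refine ⟨-y, fun j _ => ?_, map_neg f y⟩
    have := hy j (Set.mem_univ j)
    simp only [Set.mem_Ioo] at this ⊢
    constructor <;> simp <;> linarith [this.1, this.2]
  have hconv : Convex ℝ (f '' cube) :=
    (convex_pi fun _ _ => convex_Ioo _ _).linear_image f
  have hvol : volume (ZSpan.fundamentalDomain b) * 2 ^ Module.finrank ℝ (Fin n → ℝ)
      < volume (f '' cube) := by
    rw [hFdvol, one_mul, Measure.addHaar_image_linearMap, hf, LinearMap.det_toLin', hS,
      ENNReal.ofReal_one, one_mul, hcube, volume_pi_pi]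
    simp only [Real.volume_Ioo, sub_neg_eq_add, Finset.prod_const, Finset.card_univ,
      Fintype.card_fin, Module.finrank_fin_fun]
    refine ENNReal.pow_lt_pow_left hn.ne' ?_
    rw [show (2:ENNReal) = ENNReal.ofReal 2 by simp]
    rw [ENNReal.ofReal_lt_ofReal_iff (by linarith)]
    linarith
  obtain ⟨u, hu0, hus⟩ :=
    exists_ne_zero_mem_lattice_of_measure_mul_two_pow_lt_measure fund hsymm hconv hvol
  obtain ⟨y, hy, hyu⟩ := hus
  -- u has integer coordinates
  have hcoord : ∀ j, ∃ k : ℤ, (u : Fin n → ℝ) j = k := by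
    intro j
    exact int_coords _ (Submodule.mem_toAddSubgroup _ |>.mp u.2) j
  choose w hw using hcoord
  have hwne : w ≠ 0 := by
    intro h0
    apply hu0
    have : (u : Fin n → ℝ) = 0 := by
      funext j
      rw [hw j, congrFun h0 j]; simp
    exact_mod_cast Subtype.ext this
  have hge1 : (1:ℝ) ≤ |F (u : Fin n → ℝ)| := by
    obtain ⟨k, hk⟩ := hint w
    have heq : F (fun j => ((w j : ℤ) : ℝ)) = F (u : Fin n → ℝ) := by
      congr 1
      funext j
      exact (hw j).symm
    have hk0 : k ≠ 0 := by
      intro h0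
      exact hnv w hwne (by rw [hk, h0]; simp)
    rw [← heq, hk]
    rw [show |((k:ℤ):ℝ)| = ((|k| : ℤ) : ℝ) by push_cast; simp]
    exact_mod_cast Int.one_le_abs hk0
  have hlt1 : |F (u : Fin n → ℝ)| < 1 := by
    have hyc : ∀ j, |y j| ≤ c := by
      intro j
      have := hy j (Set.mem_univ j)
      simp only [Set.mem_Ioo] at this
      rw [abs_le]
      exact ⟨this.1.le, this.2.le⟩
    have : (u : Fin n → ℝ) = S.mulVec y := by
      rw [← hyu, hf, Matrix.toLin'_apply]
    rw [this]
    exact lt_of_le_of_lt (hbound c (by linarith) y hyc) hfinal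
  linarith

/-- Let `F ∈ ℤ[X]` be a decomposable form of degree `d` in `n`
variables that does not vanish on `ℤⁿ \ {0}`, and suppose `V(F)` is finite.  Then
`𝔪(F) ≥ n^{-d(n + 1/2)/n}`. -/
theorem mD_lower_bound (n d : ℕ) (hn : 0 < n) (hd : 0 < d)
    (L : Fin d → Fin n → ℂ) (F : (Fin n → ℝ) → ℝ)
    (hF : ∀ x : Fin n → ℝ, (F x : ℂ) = ∏ i, ∑ j, L i j * (x j : ℂ))
    (hint : ∀ x : Fin n → ℤ, ∃ k : ℤ, F (fun j => (x j : ℝ)) = k)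
    (hnv : ∀ x : Fin n → ℤ, x ≠ 0 → F (fun j => (x j : ℝ)) ≠ 0)
    (hV : volume {x : Fin n → ℝ | |F x| ≤ 1} < ⊤) :
    (n : ℝ) ^ (-(((d : ℝ) * ((n : ℝ) + 1 / 2)) / n)) ≤ mD L := by
  have hn0 : (0:ℝ) < n := by exact_mod_cast hn
  have hn1 : (1:ℝ) ≤ n := by exact_mod_cast hn
  have key : ∀ S : Matrix (Fin n) (Fin n) ℝ, |S.det| = 1 →
      (n : ℝ) ^ (-(((d : ℝ) * ((n : ℝ) + 1 / 2)) / n)) ≤ ∏ i, e2norm (compMat L S i) := by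
    intro S hS
    have hkey := key_height_bound n d hn hd L F hF hint hnv S hS
    set H : ℝ := ∏ i, e2norm (compMat L S i) with hH
    have hsd : Real.sqrt n ^ d = (n:ℝ) ^ ((d:ℝ) / 2) := by
      rw [Real.sqrt_eq_rpow, ← Real.rpow_natCast ((n:ℝ) ^ ((1:ℝ)/2)) d, ← Real.rpow_mul hn0.le]
      congr 1
      ring
    have h2 : (n:ℝ) ^ (-(d:ℝ) / 2) ≤ H := by
      calc (n:ℝ) ^ (-(d:ℝ) / 2) = 1 * (n:ℝ) ^ (-(d:ℝ) / 2) := (one_mul _).symm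
        _ ≤ (H * (n:ℝ) ^ ((d:ℝ) / 2)) * (n:ℝ) ^ (-(d:ℝ) / 2) := by
            refine mul_le_mul_of_nonneg_right ?_ (Real.rpow_nonneg hn0.le _)
            rwa [hsd] at hkey
        _ = H * (n:ℝ) ^ ((d:ℝ) / 2 + -(d:ℝ) / 2) := by
            rw [mul_assoc, ← Real.rpow_add hn0]
        _ = H := by
            rw [show (d:ℝ) / 2 + -(d:ℝ) / 2 = 0 by ring, Real.rpow_zero, mul_one]
    refine le_trans (Real.rpow_le_rpow_of_exponent_le hn1 ?_) h2
    have hd0 : (0:ℝ) ≤ d := Nat.cast_nonneg d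
    have hdiv : (d:ℝ) / 2 ≤ (d:ℝ) * ((n:ℝ) + 1/2) / n := by
      rw [div_le_div_iff₀ two_pos hn0]
      nlinarith
    linarith
  refine le_csInf ⟨∏ i, e2norm (compMat L 1 i), 1, by simp, rfl⟩ ?_
  rintro h ⟨S, hS, rfl⟩
  exact key S hS
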